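/- Let G be a multigraph with k = min{δ(G)−1, ⌊ρ_c(G)⌋}, and let U, U' be optimal sets with |U∩U'| even and nonempty pieces L = U∖U', R = U'∖U both odd and nonempty. Then, assuming every odd set of size ≥ 3 satisfies |E⁺| ≥ k(|·|+1)/2 and δ(G) ≥ k+1, one derives the contradiction |E⁺(U)| + |E⁺(U')| ≥ k(|U|+1)/2 + k(|U'|+1)/2 + 1; hence no two optimal sets can intersect in a nonempty even set. -/

import Mathlib

noncomputable section

open Finset

attribute [local instance] Classical.propDecidable

/-- A loopless multigraph on vertex type `V` with edge type `E`:
each edge has a pair of distinct endpoints. -/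
structure Multigraph (V : Type) (E : Type) where
  ends : E → Sym2 V
  loopless : ∀ e, ¬ (ends e).IsDiag

namespace Multigraph

variable {V E : Type} [Fintype V] [Fintype E]

/-- Degree of a vertex: number of incident edges. -/
def degree (G : Multigraph V E) (v : V) : ℕ :=
  (univ.filter fun e => v ∈ G.ends e).card

/-- Minimum degree `δ(G)`. -/
def minDegree (G : Multigraph V E) : ℕ := sInf (Set.range G.degree)

/-- An edge cover: a set of edges saturating every vertex. -/
def IsEdgeCover (G : Multigraph V E) (F : Finset E) : Prop :=
  ∀ v : V, ∃ e ∈ F, v ∈ G.ends e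

/-- `E⁺(U)`: the set of edges incident to a vertex of `U`. -/
def Eplus (G : Multigraph V E) (U : Finset V) : Finset E :=
  univ.filter fun e => ∃ v ∈ U, v ∈ G.ends e

/-- Edges with one endpoint in `A` and the other in `B`. -/
def edgesBetween (G : Multigraph V E) (A B : Finset V) : Finset E :=
  univ.filter fun e => ∃ a ∈ A, ∃ b ∈ B, G.ends e = s(a, b)

/-- Edges with both endpoints in `U`. -/
def edgesWithin (G : Multigraph V E) (U : Finset V) : Finset E :=
  univ.filter fun e => ∀ v ∈ G.ends e, v ∈ U

/-- A proper edge coloring with colors in `[1, m]`. -/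
def IsProperEdgeColoring (G : Multigraph V E) (m : ℕ) (φ : E → ℕ) : Prop :=
  (∀ e, 1 ≤ φ e ∧ φ e ≤ m) ∧
  ∀ e f, e ≠ f → (∃ v, v ∈ G.ends e ∧ v ∈ G.ends f) → φ e ≠ φ f

/-- The chromatic index `χ'(G)`. -/
def chromaticIndex (G : Multigraph V E) : ℕ :=
  sInf {m | ∃ φ : E → ℕ, G.IsProperEdgeColoring m φ}

/-- The set of colors in `[1, m]` missing at `v` under `φ`. -/
def missingColors (G : Multigraph V E) (m : ℕ) (φ : E → ℕ) (v : V) : Finset ℕ :=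
  (Finset.Icc 1 m).filter fun c => ∀ e, v ∈ G.ends e → φ e ≠ c

/-- `G` is `s`-dense: `|V| ≥ 3` is odd and `|E| = s(|V|-1)/2`. -/
def IsDense (G : Multigraph V E) (s : ℕ) : Prop :=
  Odd (Fintype.card V) ∧ 3 ≤ Fintype.card V ∧
    2 * Fintype.card E = s * (Fintype.card V - 1)

/-- `U` is optimal with respect to `k`: `|U| ≥ 3` is odd and `|E⁺(U)| = k(|U|+1)/2`. -/
def IsOptimal (G : Multigraph V E) (k : ℤ) (U : Finset V) : Prop :=
  Odd U.card ∧ 3 ≤ U.card ∧ 2 * ((G.Eplus U).card : ℤ) = k * (U.card + 1)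

/-- `k = min{δ(G) - 1, ⌊ρ_c(G)⌋}`, expressed without a junk value when no odd set of
size ≥ 3 exists (in that degenerate case `ρ_c(G) = ∞` and `k = δ(G) - 1`):
`k ≤ δ(G) - 1`, `k ≤ ⌊2|E⁺(U)|/(|U|+1)⌋` for every odd `U` with `|U| ≥ 3`, and
`k` equals one of the two bounds. -/
def IsMinParam (G : Multigraph V E) (k : ℤ) : Prop :=
  k ≤ (G.minDegree : ℤ) - 1 ∧
  (∀ U : Finset V, Odd U.card → 3 ≤ U.card →
    k * (U.card + 1) ≤ 2 * ((G.Eplus U).card : ℤ)) ∧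
  (k = (G.minDegree : ℤ) - 1 ∨
    ∃ U : Finset V, Odd U.card ∧ 3 ≤ U.card ∧
      2 * ((G.Eplus U).card : ℤ) < (k + 1) * (U.card + 1))

/-- Adjacency in the subgraph of edges colored `α` or `β`. -/
def KempeAdj (G : Multigraph V E) (φ : E → ℕ) (α β : ℕ) (u w : V) : Prop :=
  ∃ e, (φ e = α ∨ φ e = β) ∧ G.ends e = s(u, w)

/-- Reachability in the subgraph of edges colored `α` or `β`
(i.e. being in the same `(α,β)`-Kempe chain). -/
def KempeReach (G : Multigraph V E) (φ : E → ℕ) (α β : ℕ) : V → V → Prop :=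
  Relation.ReflTransGen (G.KempeAdj φ α β)

/-- Degree of `v` in the subgraph of edges colored `α` or `β`. -/
def kempeDegree (G : Multigraph V E) (φ : E → ℕ) (α β : ℕ) (v : V) : ℕ :=
  (univ.filter fun e => (φ e = α ∨ φ e = β) ∧ v ∈ G.ends e).card

/-- Adjacency of vertices. -/
def Adj (G : Multigraph V E) (u w : V) : Prop := ∃ e, G.ends e = s(u, w)

/-- Reachability (being in the same connected component). -/
def Reach (G : Multigraph V E) : V → V → Prop := Relation.ReflTransGen G.Adj

end Multigraph



section Aux
namespace Multigraph
variable {V E : Type} [Fintype V] [Fintype E]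

lemma eplus_card_eq_sum' (G : Multigraph V E) (U : Finset V) :
    (G.Eplus U).card = ∑ e : E, if ∃ v ∈ U, v ∈ G.ends e then 1 else 0 := by
  rw [Eplus, Finset.card_filter]

lemma degree_sum' (G : Multigraph V E) (M : Finset V) :
    ∑ x ∈ M, G.degree x = ∑ e : E, (M.filter fun x => x ∈ G.ends e).card := by
  simp only [degree, Finset.card_filter]
  rw [Finset.sum_comm]

lemma per_edge (G : Multigraph V E) (U U' : Finset V) (e : E) :
    ((if ∃ v ∈ U \ U', v ∈ G.ends e then 1 else 0) +
     (if ∃ v ∈ U' \ U, v ∈ G.ends e then 1 else 0) +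
     ((U ∩ U').filter fun x => x ∈ G.ends e).card : ℕ) ≤
    (if ∃ v ∈ U, v ∈ G.ends e then 1 else 0) +
    (if ∃ v ∈ U', v ∈ G.ends e then 1 else 0) := by
  obtain ⟨a, b, hab⟩ : ∃ a b, G.ends e = s(a, b) :=
    ⟨(G.ends e).out.1, (G.ends e).out.2, (Quot.out_eq (G.ends e)).symm⟩
  have hne : a ≠ b := by have := G.loopless e; rw [hab] at this; simpa using this
  have hmem : ∀ S : Finset V, (∃ v ∈ S, v ∈ G.ends e) ↔ (a ∈ S ∨ b ∈ S) := by
    intro S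
    rw [hab]
    simp only [Sym2.mem_iff]
    constructor
    · rintro ⟨v, hv, rfl | rfl⟩
      · exact Or.inl hv
      · exact Or.inr hv
    · rintro (h | h)
      · exact ⟨a, h, Or.inl rfl⟩
      · exact ⟨b, h, Or.inr rfl⟩
  have hcard : ((U ∩ U').filter fun x => x ∈ G.ends e).card =
      (if a ∈ U ∩ U' then 1 else 0) + (if b ∈ U ∩ U' then 1 else 0) := by
    rw [hab]
    simp only [Sym2.mem_iff]
    have hfa : ∀ c : V, Finset.filter (fun x => x = c) (U ∩ U') =
        if c ∈ U ∩ U' then {c} else (∅ : Finset V) := by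
      intro c; split_ifs with h <;> ext x <;> aesop
    rw [Finset.filter_or, hfa, hfa]
    have h2 : ({a} ∪ {b} : Finset V) = {a, b} := rfl
    split_ifs <;>
      simp [hne, h2, Finset.card_insert_of_notMem]
  simp only [hmem, hcard]
  simp only [Finset.mem_sdiff, Finset.mem_inter]
  by_cases ha : a ∈ U <;> by_cases ha' : a ∈ U' <;>
    by_cases hb : b ∈ U <;> by_cases hb' : b ∈ U' <;>
    simp [ha, ha', hb, hb']

lemma count_ineq (G : Multigraph V E) (U U' : Finset V) :
    (G.Eplus (U \ U')).card + (G.Eplus (U' \ U)).card + ∑ x ∈ U ∩ U', G.degree x ≤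
      (G.Eplus U).card + (G.Eplus U').card := by
  rw [eplus_card_eq_sum', eplus_card_eq_sum', eplus_card_eq_sum', eplus_card_eq_sum',
    degree_sum', ← Finset.sum_add_distrib, ← Finset.sum_add_distrib,
    ← Finset.sum_add_distrib]
  exact Finset.sum_le_sum fun e _ => per_edge G U U' e

lemma eplus_singleton (G : Multigraph V E) (v : V) :
    (G.Eplus {v}).card = G.degree v := by
  unfold Eplus degree
  congr 1
  apply Finset.filter_congr
  intro e _
  simp

lemma eplus_lower (G : Multigraph V E) (k : ℤ)
    (hlow : ∀ W : Finset V, Odd W.card → 3 ≤ W.card →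
      k * (W.card + 1) ≤ 2 * ((G.Eplus W).card : ℤ))
    (hdelta : ∀ v : V, k + 1 ≤ (G.degree v : ℤ))
    (L : Finset V) (hodd : Odd L.card) (hne : L.Nonempty) :
    k * (L.card + 1) ≤ 2 * ((G.Eplus L).card : ℤ) := by
  rcases le_or_gt 3 L.card with h3 | h3
  · exact hlow L hodd h3
  · have h1 : L.card = 1 := by
      obtain ⟨m, hm⟩ := hodd
      have := hne.card_pos
      omega
    obtain ⟨v, rfl⟩ := Finset.card_eq_one.mp h1
    rw [eplus_singleton]
    have := hdelta v
    rw [h1]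
    push_cast
    linarith

lemma main_ineq (G : Multigraph V E) (k : ℤ)
    (hlow : ∀ W : Finset V, Odd W.card → 3 ≤ W.card →
      k * (W.card + 1) ≤ 2 * ((G.Eplus W).card : ℤ))
    (hdelta : ∀ v : V, k + 1 ≤ (G.degree v : ℤ))
    (U U' : Finset V)
    (hMne : (U ∩ U').Nonempty)
    (hL : Odd (U \ U').card) (hLne : (U \ U').Nonempty)
    (hR : Odd (U' \ U).card) (hRne : (U' \ U).Nonempty) :
    k * (U.card + 1) + k * (U'.card + 1) + 2 ≤
      2 * (((G.Eplus U).card : ℤ) + ((G.Eplus U').card : ℤ)) := by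
  have hcount := count_ineq G U U'
  have hLb := eplus_lower G k hlow hdelta (U \ U') hL hLne
  have hRb := eplus_lower G k hlow hdelta (U' \ U) hR hRne
  have hdeg : (k + 1) * ((U ∩ U').card : ℤ) ≤ ((∑ x ∈ U ∩ U', G.degree x : ℕ) : ℤ) := by
    push_cast
    calc (k + 1) * ((U ∩ U').card : ℤ) = ∑ _x ∈ U ∩ U', (k + 1) := by
          rw [Finset.sum_const, nsmul_eq_mul]; ring
      _ ≤ ∑ x ∈ U ∩ U', (G.degree x : ℤ) := Finset.sum_le_sum fun x _ => hdelta x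
  have hcU : (U \ U').card + (U ∩ U').card = U.card := Finset.card_sdiff_add_card_inter U U'
  have hcU' : (U' \ U).card + (U ∩ U').card = U'.card := by
    rw [Finset.inter_comm]; exact Finset.card_sdiff_add_card_inter U' U
  have hM1 : 1 ≤ (U ∩ U').card := hMne.card_pos
  have hcount' : ((G.Eplus (U \ U')).card : ℤ) + ((G.Eplus (U' \ U)).card : ℤ) +
      ((∑ x ∈ U ∩ U', G.degree x : ℕ) : ℤ) ≤
      ((G.Eplus U).card : ℤ) + ((G.Eplus U').card : ℤ) := by exact_mod_cast hcount
  have hcUz : ((U \ U').card : ℤ) + ((U ∩ U').card : ℤ) = (U.card : ℤ) := by exact_mod_cast hcU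
  have hcUz' : ((U' \ U).card : ℤ) + ((U ∩ U').card : ℤ) = (U'.card : ℤ) := by exact_mod_cast hcU'
  have hM1z : (1 : ℤ) ≤ ((U ∩ U').card : ℤ) := by exact_mod_cast hM1
  nlinarith [hLb, hRb, hdeg, hcount', hcUz, hcUz', hM1z]

end Multigraph
end Aux

/-- Two optimal sets intersecting in a nonempty even set, with both
differences odd and nonempty, lead (using the co-density lower bound and `δ ≥ k+1`)
to `|E⁺(U)| + |E⁺(U')| ≥ k(|U|+1)/2 + k(|U'|+1)/2 + 1`; hence no two optimal sets can
intersect in a nonempty even set. -/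
theorem optimal_even_intersection_contradiction {V E : Type} [Fintype V] [Fintype E]
    (G : Multigraph V E) (k : ℤ) (hk : G.IsMinParam k)
    (U U' : Finset V) (hU : G.IsOptimal k U) (hU' : G.IsOptimal k U')
    (hM : Even (U ∩ U').card) (hMne : (U ∩ U').Nonempty)
    (hL : Odd (U \ U').card) (hLne : (U \ U').Nonempty)
    (hR : Odd (U' \ U).card) (hRne : (U' \ U).Nonempty)
    (hlow : ∀ W : Finset V, Odd W.card → 3 ≤ W.card →
      k * (W.card + 1) ≤ 2 * ((G.Eplus W).card : ℤ))
    (hdelta : ∀ v : V, k + 1 ≤ (G.degree v : ℤ)) :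
    k * (U.card + 1) + k * (U'.card + 1) + 2 ≤
      2 * (((G.Eplus U).card : ℤ) + ((G.Eplus U').card : ℤ)) ∧
    ¬ ∃ W W' : Finset V, G.IsOptimal k W ∧ G.IsOptimal k W' ∧
        Even (W ∩ W').card ∧ (W ∩ W').Nonempty ∧
        (W \ W').Nonempty ∧ (W' \ W).Nonempty := by
  have main := Multigraph.main_ineq G k hlow hdelta U U' hMne hL hLne hR hRne
  refine ⟨main, ?_⟩
  rintro ⟨W, W', hW, hW', hEv, hNe, hLne', hRne'⟩
  have hWodd := hW.1
  have hW'odd := hW'.1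
  have hcW : (W \ W').card + (W ∩ W').card = W.card := Finset.card_sdiff_add_card_inter W W'
  have hcW' : (W' \ W).card + (W ∩ W').card = W'.card := by
    rw [Finset.inter_comm]; exact Finset.card_sdiff_add_card_inter W' W
  have hLodd : Odd (W \ W').card := by
    rw [Nat.odd_iff] at hWodd ⊢; rw [Nat.even_iff] at hEv; omega
  have hRodd : Odd (W' \ W).card := by
    rw [Nat.odd_iff] at hW'odd ⊢; rw [Nat.even_iff] at hEv; omega
  have main2 := Multigraph.main_ineq G k hlow hdelta W W' hNe hLodd hLne' hRodd hRne'
  have h1 := hW.2.2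
  have h2 := hW'.2.2
  linarith
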